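/- A graph G is locally union of complete split (i.e., for every vertex v, each connected component of the subgraph induced by the open neighborhood N(v) is a complete split graph) if and only if G contains no induced subgraph isomorphic to the complement of P_4 + K_1, the complement of P_3 + 2K_1, or the complement of 2K_2 + K_1. -/

import Mathlib

open SimpleGraph

universe u
variable {V : Type u}

/-- The diamond graph: `K₄` minus the edge `{0,1}`; its tips are `0` and `1`. -/
def diamondGraph : SimpleGraph (Fin 4) :=
  SimpleGraph.fromRel (fun a b =>
    (a = 0 ∧ b = 2) ∨ (a = 0 ∧ b = 3) ∨ (a = 1 ∧ b = 2) ∨ (a = 1 ∧ b = 3) ∨ (a = 2 ∧ b = 3))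

/-- The path on four vertices. -/
def pathGraph4 : SimpleGraph (Fin 4) :=
  SimpleGraph.fromRel (fun a b => (a = 0 ∧ b = 1) ∨ (a = 1 ∧ b = 2) ∨ (a = 2 ∧ b = 3))

/-- The paw: a triangle `0,1,2` plus a pendant vertex `3` adjacent to `0`. -/
def pawGraph : SimpleGraph (Fin 4) :=
  SimpleGraph.fromRel (fun a b =>
    (a = 0 ∧ b = 1) ∨ (a = 1 ∧ b = 2) ∨ (a = 0 ∧ b = 2) ∨ (a = 0 ∧ b = 3))

/-- `K₂ + K₁`: an edge `0-1` and an isolated vertex `2`. -/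
def k2k1Graph : SimpleGraph (Fin 3) :=
  SimpleGraph.fromRel (fun a b => a = 0 ∧ b = 1)

/-- The chordless cycle on four vertices. -/
def cycleGraph4 : SimpleGraph (Fin 4) :=
  SimpleGraph.fromRel (fun a b =>
    (a = 0 ∧ b = 1) ∨ (a = 1 ∧ b = 2) ∨ (a = 2 ∧ b = 3) ∨ (a = 3 ∧ b = 0))

/-- `P₄ + K₁`: a path `0-1-2-3` and an isolated vertex `4`. -/
def p4k1Graph : SimpleGraph (Fin 5) :=
  SimpleGraph.fromRel (fun a b => (a = 0 ∧ b = 1) ∨ (a = 1 ∧ b = 2) ∨ (a = 2 ∧ b = 3))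

/-- `P₃ + 2K₁`: a path `0-1-2` and isolated vertices `3,4`. -/
def p3TwoK1Graph : SimpleGraph (Fin 5) :=
  SimpleGraph.fromRel (fun a b => (a = 0 ∧ b = 1) ∨ (a = 1 ∧ b = 2))

/-- `2K₂ + K₁`: edges `0-1` and `2-3`, and an isolated vertex `4`. -/
def twoK2K1Graph : SimpleGraph (Fin 5) :=
  SimpleGraph.fromRel (fun a b => (a = 0 ∧ b = 1) ∨ (a = 2 ∧ b = 3))

/-- `(K, S)` is a complete split partition of the subgraph of `G` induced by the set `A`:
`K ∪ S = A`, `K` and `S` are disjoint, `K` is a clique, `S` is independent, and `K` is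
complete to `S`. -/
def IsCSPartWithin (G : SimpleGraph V) (A K S : Set V) : Prop :=
  K ∪ S = A ∧ Disjoint K S ∧
    (∀ a ∈ K, ∀ b ∈ K, a ≠ b → G.Adj a b) ∧
    (∀ a ∈ S, ∀ b ∈ S, ¬ G.Adj a b) ∧
    (∀ a ∈ K, ∀ b ∈ S, G.Adj a b)

/-- A graph is a complete split graph if it admits a complete split partition. -/
def IsCompleteSplit (G : SimpleGraph V) : Prop :=
  ∃ K S : Set V, IsCSPartWithin G Set.univ K S

/-- The vertex set of the connected component of the subgraph of `G` induced by `A`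
containing the vertex `z`. -/
def compSet (G : SimpleGraph V) (A : Set V) (z : V) : Set V :=
  {w | w ∈ A ∧ Relation.ReflTransGen (fun a b => G.Adj a b ∧ a ∈ A ∧ b ∈ A) z w}

/-- `G` is locally union of complete split: for every vertex `v`, every connected component
of the subgraph induced by the open neighborhood of `v` is a complete split graph. -/
def LUCS (G : SimpleGraph V) : Prop :=
  ∀ v : V, ∀ z ∈ G.neighborSet v,
    ∃ K S : Set V, IsCSPartWithin G (compSet G (G.neighborSet v) z) K S

/-- `x` is a tip of some induced diamond of `G`. -/
def IsTip (G : SimpleGraph V) (x : V) : Prop :=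
  ∃ f : diamondGraph ↪g G, x = f 0 ∨ x = f 1

/-- The set `N_G` of vertices of `G` that are tips of induced diamonds. -/
def tipSet (G : SimpleGraph V) : Set V := {x | IsTip G x}

/-- `x` and `y` are the two tips of a common induced diamond of `G`. -/
def TipPair (G : SimpleGraph V) (x y : V) : Prop :=
  ∃ f : diamondGraph ↪g G, (x = f 0 ∧ y = f 1) ∨ (x = f 1 ∧ y = f 0)

/-- `G` has no induced diamond. -/
def DiamondFree (G : SimpleGraph V) : Prop := IsEmpty (diamondGraph ↪g G)

/-- `N` is an independent set of `G`. -/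
def IsIndep (G : SimpleGraph V) (N : Set V) : Prop := ∀ x ∈ N, ∀ y ∈ N, ¬ G.Adj x y

/-- `G` is probe diamond-free: the vertices can be partitioned into probes and an
independent set `N` of nonprobes such that adding some set of non-edges with both
endpoints in `N` yields a diamond-free graph. -/
def ProbeDiamondFree (G : SimpleGraph V) : Prop :=
  ∃ N : Set V, IsIndep G N ∧ ∃ F : SimpleGraph V,
    (∀ x y : V, F.Adj x y → x ∈ N ∧ y ∈ N ∧ ¬ G.Adj x y) ∧ DiamondFree (G ⊔ F)

/-! ### Auxiliary lemmas -/

def mkEmb {n : ℕ} (H : SimpleGraph (Fin n)) (G : SimpleGraph V) (vals : Fin n → V)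
    (inj : Function.Injective vals) (h : ∀ a b, G.Adj (vals a) (vals b) ↔ H.Adj a b) :
    H ↪g G := ⟨⟨vals, inj⟩, h _ _⟩

/-- gem embedding: induced path c-w-a-b inside the neighborhood of v. -/
lemma embed_gem (G : SimpleGraph V) (v a b w c : V)
    (hva : G.Adj v a) (hvb : G.Adj v b) (hvw : G.Adj v w) (hvc : G.Adj v c)
    (hab : G.Adj a b) (hwa : G.Adj w a) (hcw : G.Adj c w)
    (hwb : ¬ G.Adj w b) (hca : ¬ G.Adj c a) (hcb : ¬ G.Adj c b)
    (hwb' : w ≠ b) (hca' : c ≠ a) (hcb' : c ≠ b) :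
    Nonempty (p4k1Graphᶜ ↪g G) := by
  refine ⟨mkEmb _ G ![w, b, c, a, v] ?_ ?_⟩
  · intro i j
    fin_cases i <;> fin_cases j <;>
      simp_all [G.adj_comm, G.ne_of_adj] <;> intro h <;> subst h <;> simp_all
  · intro i j
    fin_cases i <;> fin_cases j <;>
      simp [p4k1Graph, SimpleGraph.compl_adj, SimpleGraph.fromRel_adj] <;>
      first
        | exact G.irrefl
        | simp_all [G.adj_comm]

/-- K4 on {v,a,b,w} plus c adjacent to exactly w,v. -/
lemma embed_paw (G : SimpleGraph V) (v a b w c : V)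
    (hva : G.Adj v a) (hvb : G.Adj v b) (hvw : G.Adj v w) (hvc : G.Adj v c)
    (hab : G.Adj a b) (hwa : G.Adj w a) (hwb : G.Adj w b) (hcw : G.Adj c w)
    (hca : ¬ G.Adj c a) (hcb : ¬ G.Adj c b)
    (hca' : c ≠ a) (hcb' : c ≠ b) :
    Nonempty (p3TwoK1Graphᶜ ↪g G) := by
  refine ⟨mkEmb _ G ![a, c, b, w, v] ?_ ?_⟩
  · intro i j
    fin_cases i <;> fin_cases j <;>
      simp_all [G.adj_comm, G.ne_of_adj] <;> intro h <;> subst h <;> simp_all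
  · intro i j
    fin_cases i <;> fin_cases j <;>
      simp [p3TwoK1Graph, SimpleGraph.compl_adj, SimpleGraph.fromRel_adj] <;>
      first
        | exact G.irrefl
        | simp_all [G.adj_comm]

/-- induced C4 p-q-r-s plus universal v. -/
lemma embed_w4 (G : SimpleGraph V) (v p q r s : V)
    (hvp : G.Adj v p) (hvq : G.Adj v q) (hvr : G.Adj v r) (hvs : G.Adj v s)
    (hpq : G.Adj p q) (hqr : G.Adj q r) (hrs : G.Adj r s) (hsp : G.Adj s p)
    (hpr : ¬ G.Adj p r) (hqs : ¬ G.Adj q s)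
    (hpr' : p ≠ r) (hqs' : q ≠ s) :
    Nonempty (twoK2K1Graphᶜ ↪g G) := by
  refine ⟨mkEmb _ G ![p, r, q, s, v] ?_ ?_⟩
  · intro i j
    fin_cases i <;> fin_cases j <;>
      simp_all [G.adj_comm, G.ne_of_adj] <;> intro h <;> subst h <;> simp_all
  · intro i j
    fin_cases i <;> fin_cases j <;>
      simp [twoK2K1Graph, SimpleGraph.compl_adj, SimpleGraph.fromRel_adj] <;>
      first
        | exact G.irrefl
        | simp_all [G.adj_comm]

/-- No induced P4 inside a complete-split-partitioned set. -/
lemma cs_no_p4 (G : SimpleGraph V) {C K S : Set V} (h : IsCSPartWithin G C K S)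
    {p q r s : V} (hp : p ∈ C) (hq : q ∈ C) (hr : r ∈ C) (hs : s ∈ C)
    (hpq : G.Adj p q) (hqr : G.Adj q r) (hrs : G.Adj r s)
    (hpr : ¬ G.Adj p r) (hqs : ¬ G.Adj q s)
    (hpr' : p ≠ r) (hqs' : q ≠ s) : False := by
  obtain ⟨hun, hdis, hK, hS, hKS⟩ := h
  have mem : ∀ x ∈ C, x ∈ K ∨ x ∈ S := fun x hx => by rw [← hun] at hx; exact hx
  rcases mem q hq with hqK | hqS
  · rcases mem s hs with hsK | hsS
    · exact hqs (hK q hqK s hsK hqs')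
    · exact hqs (hKS q hqK s hsS)
  · rcases mem r hr with hrK | hrS
    · rcases mem p hp with hpK | hpS
      · exact hpr (hK p hpK r hrK hpr')
      · exact hS p hpS q hqS hpq
    · exact hS q hqS r hrS hqr

/-- No induced paw (triangle a,b,c and pendant d at c) inside a CS-partitioned set. -/
lemma cs_no_paw (G : SimpleGraph V) {C K S : Set V} (h : IsCSPartWithin G C K S)
    {a b c d : V} (ha : a ∈ C) (hb : b ∈ C) (hc : c ∈ C) (hd : d ∈ C)
    (hab : G.Adj a b) (hac : G.Adj a c) (hbc : G.Adj b c) (hdc : G.Adj d c)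
    (hda : ¬ G.Adj d a) (hdb : ¬ G.Adj d b)
    (hda' : d ≠ a) (hdb' : d ≠ b) : False := by
  obtain ⟨hun, hdis, hK, hS, hKS⟩ := h
  have mem : ∀ x ∈ C, x ∈ K ∨ x ∈ S := fun x hx => by rw [← hun] at hx; exact hx
  rcases mem d hd with hdK | hdS
  · rcases mem a ha with haK | haS
    · exact hda (hK d hdK a haK hda')
    · exact hda (hKS d hdK a haS)
  · rcases mem a ha with haK | haS
    · exact hda (hKS a haK d hdS).symm
    · rcases mem b hb with hbK | hbS
      · exact hdb (hKS b hbK d hdS).symm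
      · exact hS a haS b hbS hab

/-- No induced C4 inside a CS-partitioned set. -/
lemma cs_no_c4 (G : SimpleGraph V) {C K S : Set V} (h : IsCSPartWithin G C K S)
    {p q r s : V} (hp : p ∈ C) (hq : q ∈ C) (hr : r ∈ C) (hs : s ∈ C)
    (hpq : G.Adj p q) (hqr : G.Adj q r) (hrs : G.Adj r s) (hsp : G.Adj s p)
    (hpr : ¬ G.Adj p r) (hqs : ¬ G.Adj q s)
    (hpr' : p ≠ r) (hqs' : q ≠ s) : False := by
  obtain ⟨hun, hdis, hK, hS, hKS⟩ := h
  have mem : ∀ x ∈ C, x ∈ K ∨ x ∈ S := fun x hx => by rw [← hun] at hx; exact hx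
  rcases mem q hq with hqK | hqS
  · rcases mem s hs with hsK | hsS
    · exact hqs (hK q hqK s hsK hqs')
    · exact hqs (hKS q hqK s hsS)
  · rcases mem p hp with hpK | hpS
    · rcases mem r hr with hrK | hrS
      · exact hpr (hK p hpK r hrK hpr')
      · exact hS q hqS r hrS hqr
    · exact hS p hpS q hqS hpq

/-- In a component of a neighborhood, no induced K2+K1 (given forbidden-subgraph-freeness). -/
lemma comp_k2k1free (G : SimpleGraph V)
    (h1 : ¬ Nonempty (p4k1Graphᶜ ↪g G)) (h2 : ¬ Nonempty (p3TwoK1Graphᶜ ↪g G))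
    (v z : V) {a b c : V}
    (ha : a ∈ compSet G (G.neighborSet v) z) (hb : b ∈ compSet G (G.neighborSet v) z)
    (hc : c ∈ compSet G (G.neighborSet v) z)
    (hab : G.Adj a b) (hca : ¬ G.Adj c a) (hcb : ¬ G.Adj c b) : False := by
  set A := G.neighborSet v with hA
  set r := fun x y => G.Adj x y ∧ x ∈ A ∧ y ∈ A with hr
  have hsymm : Symmetric r := fun x y ⟨h, hx, hy⟩ => ⟨h.symm, hy, hx⟩
  have hreach : Relation.ReflTransGen r c a :=
    ((@Relation.ReflTransGen.stdSymm _ r ⟨hsymm⟩).symm _ _ hc.2).trans ha.2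
  have hvA : ∀ x, x ∈ A → G.Adj v x := fun x hx => hx
  have main : ∀ x, Relation.ReflTransGen r x a → x ∈ A →
      ¬ G.Adj x a → ¬ G.Adj x b → False := by
    intro x hx
    refine Relation.ReflTransGen.head_induction_on hx ?_ ?_
    · intro _ _ hxb; exact hxb hab
    · intro x' y' hxy hya ih hxA hxa hxb
      obtain ⟨hadj, hxA', hyA⟩ := hxy
      have hxa' : x' ≠ a := by rintro rfl; exact hxb hab
      have hxb' : x' ≠ b := by rintro rfl; exact hxa hab.symm
      by_cases h1a : G.Adj y' a
      · by_cases h1b : G.Adj y' b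
        · exact h2 (embed_paw G v a b y' x' (hvA a ha.1) (hvA b hb.1) (hvA y' hyA)
            (hvA x' hxA) hab h1a h1b hadj hxa hxb hxa' hxb')
        · have hyb' : y' ≠ b := by rintro rfl; exact hxb hadj
          exact h1 (embed_gem G v a b y' x' (hvA a ha.1) (hvA b hb.1) (hvA y' hyA)
            (hvA x' hxA) hab h1a hadj h1b hxa hxb hyb' hxa' hxb')
      · by_cases h1b : G.Adj y' b
        · have hya' : y' ≠ a := by rintro rfl; exact hxa hadj
          exact h1 (embed_gem G v b a y' x' (hvA b hb.1) (hvA a ha.1) (hvA y' hyA)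
            (hvA x' hxA) hab.symm h1b hadj h1a hxb hxa hya' hxb' hxa')
        · exact ih hyA h1a h1b
  exact main c hreach hc.1 hca hcb

theorem stmt4 (G : SimpleGraph V) :
    LUCS G ↔
      ¬ Nonempty (p4k1Graphᶜ ↪g G) ∧ ¬ Nonempty (p3TwoK1Graphᶜ ↪g G) ∧
        ¬ Nonempty (twoK2K1Graphᶜ ↪g G) := by
  constructor
  · intro hL
    refine ⟨?_, ?_, ?_⟩
    · rintro ⟨f⟩
      have hadj : ∀ i j : Fin 5, p4k1Graphᶜ.Adj i j → G.Adj (f i) (f j) :=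
        fun i j h => f.map_adj_iff.mpr h
      have hnadj : ∀ i j : Fin 5, ¬ p4k1Graphᶜ.Adj i j → ¬ G.Adj (f i) (f j) :=
        fun i j h h' => h (f.map_adj_iff.mp h')
      have e40 : G.Adj (f 4) (f 0) := hadj 4 0 (by simp [p4k1Graph])
      have e41 : G.Adj (f 4) (f 1) := hadj 4 1 (by simp [p4k1Graph])
      have e42 : G.Adj (f 4) (f 2) := hadj 4 2 (by simp [p4k1Graph])
      have e43 : G.Adj (f 4) (f 3) := hadj 4 3 (by simp [p4k1Graph])
      have e20 : G.Adj (f 2) (f 0) := hadj 2 0 (by simp [p4k1Graph])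
      have e03 : G.Adj (f 0) (f 3) := hadj 0 3 (by simp [p4k1Graph])
      have e31 : G.Adj (f 3) (f 1) := hadj 3 1 (by simp [p4k1Graph])
      have n23 : ¬ G.Adj (f 2) (f 3) := hnadj 2 3 (by simp [p4k1Graph])
      have n21 : ¬ G.Adj (f 2) (f 1) := hnadj 2 1 (by simp [p4k1Graph])
      have n01 : ¬ G.Adj (f 0) (f 1) := hnadj 0 1 (by simp [p4k1Graph])
      obtain ⟨K, S, hcs⟩ := hL (f 4) (f 0) e40
      set A := G.neighborSet (f 4) with hA
      set rr := fun x y => G.Adj x y ∧ x ∈ A ∧ y ∈ A with hrr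
      have m0 : (f 0) ∈ A := e40
      have m1 : (f 1) ∈ A := e41
      have m2 : (f 2) ∈ A := e42
      have m3 : (f 3) ∈ A := e43
      have c0 : (f 0) ∈ compSet G A (f 0) := ⟨m0, Relation.ReflTransGen.refl⟩
      have c2 : (f 2) ∈ compSet G A (f 0) :=
        ⟨m2, Relation.ReflTransGen.single ⟨e20.symm, m0, m2⟩⟩
      have c3 : (f 3) ∈ compSet G A (f 0) :=
        ⟨m3, Relation.ReflTransGen.single ⟨e03, m0, m3⟩⟩
      have c1 : (f 1) ∈ compSet G A (f 0) :=
        ⟨m1, (Relation.ReflTransGen.single ⟨e03, m0, m3⟩).tail ⟨e31, m3, m1⟩⟩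
      exact cs_no_p4 G hcs c2 c0 c3 c1 e20 e03 e31 n23 n01
        (fun h => absurd (f.injective h) (by decide)) (fun h => absurd (f.injective h) (by decide))
    · rintro ⟨f⟩
      have hadj : ∀ i j : Fin 5, p3TwoK1Graphᶜ.Adj i j → G.Adj (f i) (f j) :=
        fun i j h => f.map_adj_iff.mpr h
      have hnadj : ∀ i j : Fin 5, ¬ p3TwoK1Graphᶜ.Adj i j → ¬ G.Adj (f i) (f j) :=
        fun i j h h' => h (f.map_adj_iff.mp h')
      have e30 : G.Adj (f 3) (f 0) := hadj 3 0 (by simp [p3TwoK1Graph])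
      have e31 : G.Adj (f 3) (f 1) := hadj 3 1 (by simp [p3TwoK1Graph])
      have e32 : G.Adj (f 3) (f 2) := hadj 3 2 (by simp [p3TwoK1Graph])
      have e34 : G.Adj (f 3) (f 4) := hadj 3 4 (by simp [p3TwoK1Graph])
      have e02 : G.Adj (f 0) (f 2) := hadj 0 2 (by simp [p3TwoK1Graph])
      have e04 : G.Adj (f 0) (f 4) := hadj 0 4 (by simp [p3TwoK1Graph])
      have e24 : G.Adj (f 2) (f 4) := hadj 2 4 (by simp [p3TwoK1Graph])
      have e14 : G.Adj (f 1) (f 4) := hadj 1 4 (by simp [p3TwoK1Graph])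
      have n10 : ¬ G.Adj (f 1) (f 0) := hnadj 1 0 (by simp [p3TwoK1Graph])
      have n12 : ¬ G.Adj (f 1) (f 2) := hnadj 1 2 (by simp [p3TwoK1Graph])
      obtain ⟨K, S, hcs⟩ := hL (f 3) (f 4) e34
      set A := G.neighborSet (f 3) with hA
      have m0 : (f 0) ∈ A := e30
      have m1 : (f 1) ∈ A := e31
      have m2 : (f 2) ∈ A := e32
      have m4 : (f 4) ∈ A := e34
      have c4 : (f 4) ∈ compSet G A (f 4) := ⟨m4, Relation.ReflTransGen.refl⟩
      have c0 : (f 0) ∈ compSet G A (f 4) :=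
        ⟨m0, Relation.ReflTransGen.single ⟨e04.symm, m4, m0⟩⟩
      have c2 : (f 2) ∈ compSet G A (f 4) :=
        ⟨m2, Relation.ReflTransGen.single ⟨e24.symm, m4, m2⟩⟩
      have c1 : (f 1) ∈ compSet G A (f 4) :=
        ⟨m1, Relation.ReflTransGen.single ⟨e14.symm, m4, m1⟩⟩
      exact cs_no_paw G hcs c0 c2 c4 c1 e02 e04 e24 e14 n10 n12
        (fun h => absurd (f.injective h) (by decide)) (fun h => absurd (f.injective h) (by decide))
    · rintro ⟨f⟩
      have hadj : ∀ i j : Fin 5, twoK2K1Graphᶜ.Adj i j → G.Adj (f i) (f j) :=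
        fun i j h => f.map_adj_iff.mpr h
      have hnadj : ∀ i j : Fin 5, ¬ twoK2K1Graphᶜ.Adj i j → ¬ G.Adj (f i) (f j) :=
        fun i j h h' => h (f.map_adj_iff.mp h')
      have e40 : G.Adj (f 4) (f 0) := hadj 4 0 (by simp [twoK2K1Graph])
      have e41 : G.Adj (f 4) (f 1) := hadj 4 1 (by simp [twoK2K1Graph])
      have e42 : G.Adj (f 4) (f 2) := hadj 4 2 (by simp [twoK2K1Graph])
      have e43 : G.Adj (f 4) (f 3) := hadj 4 3 (by simp [twoK2K1Graph])
      have e02 : G.Adj (f 0) (f 2) := hadj 0 2 (by simp [twoK2K1Graph])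
      have e21 : G.Adj (f 2) (f 1) := hadj 2 1 (by simp [twoK2K1Graph])
      have e13 : G.Adj (f 1) (f 3) := hadj 1 3 (by simp [twoK2K1Graph])
      have e30 : G.Adj (f 3) (f 0) := hadj 3 0 (by simp [twoK2K1Graph])
      have n01 : ¬ G.Adj (f 0) (f 1) := hnadj 0 1 (by simp [twoK2K1Graph])
      have n23 : ¬ G.Adj (f 2) (f 3) := hnadj 2 3 (by simp [twoK2K1Graph])
      obtain ⟨K, S, hcs⟩ := hL (f 4) (f 0) e40
      set A := G.neighborSet (f 4) with hA
      have m0 : (f 0) ∈ A := e40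
      have m1 : (f 1) ∈ A := e41
      have m2 : (f 2) ∈ A := e42
      have m3 : (f 3) ∈ A := e43
      have c0 : (f 0) ∈ compSet G A (f 0) := ⟨m0, Relation.ReflTransGen.refl⟩
      have c2 : (f 2) ∈ compSet G A (f 0) :=
        ⟨m2, Relation.ReflTransGen.single ⟨e02, m0, m2⟩⟩
      have c3 : (f 3) ∈ compSet G A (f 0) :=
        ⟨m3, Relation.ReflTransGen.single ⟨e30.symm, m0, m3⟩⟩
      have c1 : (f 1) ∈ compSet G A (f 0) :=
        ⟨m1, (Relation.ReflTransGen.single ⟨e02, m0, m2⟩).tail ⟨e21, m2, m1⟩⟩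
      exact cs_no_c4 G hcs c0 c2 c1 c3 e02 e21 e13 e30 n01 n23
        (fun h => absurd (f.injective h) (by decide)) (fun h => absurd (f.injective h) (by decide))
  · rintro ⟨h1, h2, h3⟩ v z hz
    set A := G.neighborSet v with hA
    set C := compSet G A z with hC
    have hCA : C ⊆ A := fun x hx => hx.1
    have hvA : ∀ x, x ∈ A → G.Adj v x := fun x hx => hx
    refine ⟨{x | x ∈ C ∧ ∀ y ∈ C, y ≠ x → G.Adj x y},
      {x | x ∈ C ∧ ∃ y, y ∈ C ∧ y ≠ x ∧ ¬ G.Adj x y}, ?_, ?_, ?_, ?_, ?_⟩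
    · ext x
      constructor
      · rintro (⟨hx, _⟩ | ⟨hx, _⟩) <;> exact hx
      · intro hx
        by_cases h : ∀ y ∈ C, y ≠ x → G.Adj x y
        · exact Or.inl ⟨hx, h⟩
        · push_neg at h
          obtain ⟨y, hy, hyx, hnadj⟩ := h
          exact Or.inr ⟨hx, y, hy, hyx, hnadj⟩
    · rw [Set.disjoint_left]
      rintro x ⟨hx, hK⟩ ⟨_, y, hy, hyx, hnadj⟩
      exact hnadj (hK y hy hyx)
    · rintro a ⟨haC, ha⟩ b ⟨hbC, _⟩ hne
      exact ha b hbC hne.symm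
    · rintro x ⟨hxC, x', hx'C, hx'x, hxx'⟩ y ⟨hyC, y', hy'C, hy'y, hyy'⟩ hxy
      -- x' is adjacent to y (else K2+K1)
      have hx'y : G.Adj x' y := by
        by_contra hne
        exact comp_k2k1free G h1 h2 v z hxC hyC hx'C
          hxy (fun h => hxx' h.symm) hne
      have hy'x : G.Adj y' x := by
        by_contra hne
        exact comp_k2k1free G h1 h2 v z hyC hxC hy'C
          hxy.symm (fun h => hyy' h.symm) hne
      have hx'y' : x' ≠ y' := by
        rintro rfl; exact hyy' hx'y.symm
      by_cases hadj : G.Adj x' y'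
      · -- C4 : x - y - x' - y' - x
        have hxx'2 : ¬ G.Adj x x' := hxx'
        have hyy'2 : ¬ G.Adj y y' := hyy'
        exact h3 (embed_w4 G v x y x' y' (hvA x (hCA hxC)) (hvA y (hCA hyC))
          (hvA x' (hCA hx'C)) (hvA y' (hCA hy'C)) hxy hx'y.symm hadj hy'x
          hxx' hyy' (Ne.symm hx'x) (Ne.symm hy'y))
      · -- edge x-y' with x' nonadjacent to both : K2+K1
        exact comp_k2k1free G h1 h2 v z hxC hy'C hx'C hy'x.symm
          (fun h => hxx' h.symm) hadj
    · rintro a ⟨haC, ha⟩ b ⟨hbC, y, hy, hyb, hnadj⟩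
      have hab : a ≠ b := by
        rintro rfl
        exact hnadj (ha y hy hyb)
      exact ha b hbC hab.symm
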